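/- arXiv:1502.00955 — 5 statements merged into one kernel-verified Lean document; each statement's English description precedes it below -/
import Mathlib

section
/- The numerical range F(A) of any complex n-by-n matrix A is convex (Toeplitz–Hausdorff theorem). -/
open Matrix Complex

private lemma star_dot_self' {n : ℕ} (v : Fin n → ℂ) :
    star v ⬝ᵥ v = ((∑ i, Complex.normSq (v i) : ℝ) : ℂ) := by
  simp [dotProduct, Complex.normSq_eq_conj_mul_self]

private lemma star_dot_self_pos {n : ℕ} (v : Fin n → ℂ) (hv : v ≠ 0) :
    0 < ((star v ⬝ᵥ v : ℂ)).re := by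
  rw [star_dot_self']
  simp only [Complex.ofReal_re]
  obtain ⟨i, hi⟩ := Function.ne_iff.mp hv
  exact Finset.sum_pos' (fun i _ => Complex.normSq_nonneg _)
    ⟨i, Finset.mem_univ i, Complex.normSq_pos.mpr (by simpa using hi)⟩

private lemma smul_dot {n : ℕ} (v w : Fin n → ℂ) (s t : ℂ) :
    star (s • v) ⬝ᵥ (t • w) = starRingEnd ℂ s * t * (star v ⬝ᵥ w) := by
  simp [star_smul, smul_dotProduct, dotProduct_smul, smul_eq_mul]
  ring

private lemma dot_conj_symm {n : ℕ} (x y : Fin n → ℂ) :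
    star y ⬝ᵥ x = starRingEnd ℂ (star x ⬝ᵥ y) := by
  calc star y ⬝ᵥ x = star (star x ⬝ᵥ y) := by rw [Matrix.star_dotProduct]
    _ = starRingEnd ℂ (star x ⬝ᵥ y) := rfl

private lemma expand_dot {n : ℕ} (x y : Fin n → ℂ) (s t : ℂ) :
    star (s•x + t•y) ⬝ᵥ (s•x + t•y) =
      starRingEnd ℂ s * s * (star x ⬝ᵥ x) + starRingEnd ℂ s * t * (star x ⬝ᵥ y)
      + starRingEnd ℂ t * s * (star y ⬝ᵥ x) + starRingEnd ℂ t * t * (star y ⬝ᵥ y) := by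
  simp [star_add, star_smul, add_dotProduct, smul_dotProduct,
    dotProduct_add, dotProduct_smul, smul_eq_mul]
  ring

private lemma expand_dotA {n : ℕ} (A : Matrix (Fin n) (Fin n) ℂ) (x y : Fin n → ℂ) (s t : ℂ) :
    star (s•x + t•y) ⬝ᵥ (A *ᵥ (s•x + t•y)) =
      starRingEnd ℂ s * s * (star x ⬝ᵥ (A *ᵥ x)) + starRingEnd ℂ s * t * (star x ⬝ᵥ (A *ᵥ y))
      + starRingEnd ℂ t * s * (star y ⬝ᵥ (A *ᵥ x)) + starRingEnd ℂ t * t * (star y ⬝ᵥ (A *ᵥ y)) := by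
  simp [Matrix.mulVec_add, Matrix.mulVec_smul, star_add, star_smul, add_dotProduct,
    smul_dotProduct, dotProduct_add, dotProduct_smul, smul_eq_mul]
  ring

/-- Toeplitz–Hausdorff: the numerical range is convex. -/
theorem numericalRange_convex (n : ℕ) (A : Matrix (Fin n) (Fin n) ℂ) :
    Convex ℝ {z : ℂ | ∃ x : Fin n → ℂ, star x ⬝ᵥ x = 1 ∧ star x ⬝ᵥ (A *ᵥ x) = z} := by
  rintro a ⟨x, hx1, hx2⟩ b ⟨y, hy1, hy2⟩ p q hp hq hpq
  simp only [Set.mem_setOf_eq]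
  by_cases hab : a = b
  · exact ⟨x, hx1, by rw [hx2, hab, ← add_smul, hpq, one_smul]⟩
  have hc : a - b ≠ 0 := sub_ne_zero.mpr hab
  -- phase adjustment
  set d0 : ℂ := star x ⬝ᵥ y with hd0
  set c1 : ℂ := star x ⬝ᵥ (A *ᵥ y) with hc1
  set c2 : ℂ := star y ⬝ᵥ (A *ᵥ x) with hc2
  set A1 : ℂ := (c1 - b*d0)/(a-b) with hA1
  set A2 : ℂ := (c2 - b * starRingEnd ℂ d0)/(a-b) with hA2
  set w : ℂ := A1 - starRingEnd ℂ A2 with hwdef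
  set e : ℂ := if w = 0 then 1 else w / ‖w‖ with hedef
  have hnormw : starRingEnd ℂ w * w = ((‖w‖^2 : ℝ) : ℂ) := by
    rw [mul_comm, Complex.mul_conj]
    norm_cast
    simp [Complex.normSq_eq_norm_sq]
  have he : starRingEnd ℂ e * e = 1 := by
    by_cases h : w = 0
    · simp [hedef, h]
    · have hwn : (‖w‖ : ℂ) ≠ 0 := by
        simpa using norm_ne_zero_iff.mpr h
      have h2 : ((‖w‖^2 : ℝ):ℂ) ≠ 0 := by
        exact_mod_cast pow_ne_zero 2 (norm_ne_zero_iff.mpr h)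
      rw [hedef, if_neg h, map_div₀, Complex.conj_ofReal, div_mul_div_comm, hnormw,
        show ((‖w‖:ℝ):ℂ) * ((‖w‖:ℝ):ℂ) = ((‖w‖^2 : ℝ):ℂ) by push_cast; ring, div_self h2]
  have hew : (starRingEnd ℂ e * w).im = 0 := by
    by_cases h : w = 0
    · simp [h]
    · have hwn : (‖w‖ : ℂ) ≠ 0 := by simpa using norm_ne_zero_iff.mpr h
      rw [hedef, if_neg h, map_div₀, Complex.conj_ofReal, div_mul_eq_mul_div, hnormw]
      rw [show ((‖w‖^2 : ℝ) : ℂ) / ((‖w‖:ℝ):ℂ) = ((‖w‖^2 / ‖w‖ : ℝ) : ℂ) by push_cast; ring]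
      exact Complex.ofReal_im _
  set x' : Fin n → ℂ := e • x with hx'def
  have hx'1 : star x' ⬝ᵥ x' = 1 := by
    rw [hx'def, smul_dot, hx1, he, mul_one]
  have hx'2 : star x' ⬝ᵥ (A *ᵥ x') = a := by
    rw [hx'def, Matrix.mulVec_smul, smul_dot, hx2, he, one_mul]
  have hc1' : star x' ⬝ᵥ (A *ᵥ y) = starRingEnd ℂ e * c1 := by
    rw [hx'def, show (A *ᵥ y) = (1:ℂ) • (A *ᵥ y) by simp, smul_dot]
    simp [hc1]
  have hc2' : star y ⬝ᵥ (A *ᵥ x') = e * c2 := by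
    rw [hx'def, Matrix.mulVec_smul, show star y = star ((1:ℂ) • y) by simp, smul_dot]
    simp [hc2]
  have hd' : star x' ⬝ᵥ y = starRingEnd ℂ e * d0 := by
    rw [hx'def, show y = (1:ℂ) • y by simp, smul_dot]
    simp [hd0]
  have hd'' : star y ⬝ᵥ x' = e * starRingEnd ℂ d0 := by
    rw [dot_conj_symm x' y, hd', _root_.map_mul, Complex.conj_conj]
  set Γ : ℂ := ((star x' ⬝ᵥ (A *ᵥ y)) - b * (star x' ⬝ᵥ y)
      + ((star y ⬝ᵥ (A *ᵥ x')) - b * (star y ⬝ᵥ x')))/(a-b) with hΓdef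
  have hΓim : Γ.im = 0 := by
    have hΓeq : Γ = starRingEnd ℂ e * A1 + e * A2 := by
      rw [hΓdef, hc1', hc2', hd', hd'', hA1, hA2]
      field_simp
    have haux : (((2*(e*A2).re : ℝ)):ℂ) = e*A2 + starRingEnd ℂ (e*A2) := by
      rw [Complex.add_conj]
      try push_cast
      try ring
    have h3 : Γ = starRingEnd ℂ e * w + ((2*(e*A2).re : ℝ):ℂ) := by
      rw [hΓeq, hwdef, haux, _root_.map_mul]
      ring
    rw [h3, Complex.add_im, hew, zero_add, Complex.ofReal_im]
  -- the path
  set u : ℝ → (Fin n → ℂ) := fun t => ((1-t : ℝ) : ℂ) • x' + ((t : ℝ) : ℂ) • y with hu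
  set D : ℝ := 2 * (star x' ⬝ᵥ y).re with hD
  set Nf : ℝ → ℝ := fun t => (1-t)^2 + t^2 + (1-t)*t*D with hNf
  have hDc : (star x' ⬝ᵥ y) + (star y ⬝ᵥ x') = (D : ℂ) := by
    rw [dot_conj_symm x' y, Complex.add_conj, hD]
    try push_cast
    try ring
  have expandN : ∀ t : ℝ, star (u t) ⬝ᵥ (u t) = ((Nf t : ℝ) : ℂ) := by
    intro t
    rw [hu]
    simp only
    rw [expand_dot, hx'1, hy1]
    have hyx' : star y ⬝ᵥ x' = (D:ℂ) - star x' ⬝ᵥ y := by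
      linear_combination hDc
    rw [hyx', hNf]
    simp only [Complex.conj_ofReal]
    push_cast
    ring
  have expandM : ∀ t : ℝ, star (u t) ⬝ᵥ (A *ᵥ (u t)) =
      (a-b) * ((((1-t)^2 : ℝ) : ℂ) + ((t*(1-t) : ℝ) : ℂ) * Γ) + b * ((Nf t : ℝ):ℂ) := by
    intro t
    rw [← expandN t, hu]
    simp only
    rw [expand_dotA, expand_dot, hx'2, hy2, hx'1, hy1, hΓdef]
    simp only [Complex.conj_ofReal]
    field_simp
    push_cast
    ring
  have hune : ∀ t ∈ Set.Icc (0:ℝ) 1, u t ≠ 0 := by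
    intro t ht h0
    by_cases ht0 : t = 0
    · rw [hu] at h0
      simp only [ht0] at h0
      norm_num at h0
      rw [h0] at hx'1
      simp at hx'1
    · by_cases ht1 : t = 1
      · rw [hu] at h0
        simp only [ht1] at h0
        norm_num at h0
        rw [h0] at hy1
        simp at hy1
      · have htne : ((t:ℝ):ℂ) ≠ 0 := by exact_mod_cast ht0
        set μ : ℝ := -(1-t)/t with hμ
        have hyx : y = ((μ:ℝ):ℂ) • x' := by
          have h0' : ((t:ℝ):ℂ) • y = (-((1-t:ℝ):ℂ)) • x' := by
            rw [neg_smul]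
            rw [hu] at h0
            simp only at h0
            have := eq_neg_of_add_eq_zero_right h0
            rw [← this]
          calc y = (((t:ℝ):ℂ))⁻¹ • (((t:ℝ):ℂ) • y) := by
                rw [smul_smul, inv_mul_cancel₀ htne, one_smul]
            _ = ((μ:ℝ):ℂ) • x' := by
                rw [h0', smul_smul, hμ]
                congr 1
                push_cast
                field_simp
        have h1 : (1:ℂ) = ((μ^2 : ℝ):ℂ) := by
          rw [← hy1, hyx, smul_dot, hx'1, Complex.conj_ofReal]
          push_cast
          ring
        have h2 : b = ((μ^2 : ℝ):ℂ) * a := by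
          rw [← hy2, hyx, Matrix.mulVec_smul, smul_dot, hx'2, Complex.conj_ofReal]
          push_cast
          ring
        rw [← h1, one_mul] at h2
        exact hab h2.symm
  have hNpos : ∀ t ∈ Set.Icc (0:ℝ) 1, 0 < Nf t := by
    intro t ht
    have := star_dot_self_pos (u t) (hune t ht)
    rw [expandN t] at this
    simpa using this
  set f : ℝ → ℝ := fun t => ((1-t)^2 + t*(1-t)*Γ.re) / Nf t with hf
  have hf0 : f 0 = 1 := by
    simp [hf, hNf]
  have hf1 : f 1 = 0 := by
    simp [hf, hNf]
  have hcont : ContinuousOn f (Set.Icc 0 1) := by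
    apply ContinuousOn.div
    · fun_prop
    · fun_prop
    · exact fun t ht => (hNpos t ht).ne'
  have hp1 : p ≤ 1 := by linarith
  have hIVT := intermediate_value_Icc' (by norm_num : (0:ℝ) ≤ 1) hcont
  obtain ⟨t₀, ht₀, hft₀⟩ := hIVT (show p ∈ Set.Icc (f 1) (f 0) by rw [hf0, hf1]; exact ⟨hp, hp1⟩)
  set r : ℝ := Real.sqrt (Nf t₀) with hr
  have hNt₀ : 0 < Nf t₀ := hNpos t₀ ht₀
  have hrpos : 0 < r := Real.sqrt_pos.mpr hNt₀
  have hr2 : r^2 = Nf t₀ := Real.sq_sqrt hNt₀.le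
  have hrc : ((r:ℝ):ℂ) ≠ 0 := by exact_mod_cast hrpos.ne'
  have hNr : ((Nf t₀ : ℝ):ℂ) = ((r:ℝ):ℂ) * ((r:ℝ):ℂ) := by
    rw [← hr2]; push_cast; ring
  have hkey : (1-t₀)^2 + t₀*(1-t₀)*Γ.re = p * Nf t₀ := by
    have : ((1-t₀)^2 + t₀*(1-t₀)*Γ.re) / Nf t₀ = p := hft₀
    field_simp at this
    linarith [this]
  have hΓre : Γ = ((Γ.re : ℝ) : ℂ) := Complex.ext (by simp) (by simp [hΓim])
  refine ⟨(((r:ℝ):ℂ))⁻¹ • u t₀, ?_, ?_⟩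
  · rw [smul_dot, expandN t₀, map_inv₀, Complex.conj_ofReal, hNr]
    field_simp
  · rw [Matrix.mulVec_smul, smul_dot, expandM t₀, map_inv₀, Complex.conj_ofReal]
    have hcast : (((1-t₀)^2 : ℝ) : ℂ) + ((t₀*(1-t₀) : ℝ):ℂ) * Γ = ((p * Nf t₀ : ℝ):ℂ) := by
      rw [hΓre]
      push_cast
      exact_mod_cast congrArg (fun z : ℝ => (z:ℂ)) hkey
    rw [hcast, Complex.ofReal_mul, hNr]
    have hq' : ((q:ℝ):ℂ) = 1 - ((p:ℝ):ℂ) := by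
      have : q = 1 - p := by linarith
      exact_mod_cast congrArg (fun z : ℝ => (z:ℂ)) this
    rw [Complex.real_smul, Complex.real_smul, hq']
    field_simp
    ring
end

section
/- Suppose x(θ) is a differentiable family of unit vectors with Re(e^{-iθ}A)x(θ) = λ(θ)x(θ) where λ(θ) = x(θ)*Re(e^{-iθ}A)x(θ). Then the critical curve z(θ) = x(θ)*A x(θ) satisfies z(θ) = e^{iθ}(λ(θ) + i·λ'(θ)). -/
open Matrix

private lemma conj_quad {n : ℕ} (B : Matrix (Fin n) (Fin n) ℂ) (u w : Fin n → ℂ) :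
    star (star u ⬝ᵥ (B *ᵥ w)) = star w ⬝ᵥ (Bᴴ *ᵥ u) := by
  rw [star_dotProduct]; simp [Matrix.dotProduct_mulVec, Matrix.star_mulVec]

private lemma hasDerivAt_quad {n : ℕ} (B : Matrix (Fin n) (Fin n) ℂ) (x : ℝ → Fin n → ℂ)
    (v : Fin n → ℂ) (θ : ℝ) (hx : HasDerivAt x v θ) :
    HasDerivAt (fun t => star (x t) ⬝ᵥ (B *ᵥ x t))
      (star v ⬝ᵥ (B *ᵥ x θ) + star (x θ) ⬝ᵥ (B *ᵥ v)) θ := by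
  have hcomp : ∀ i, HasDerivAt (fun t => x t i) (v i) θ := hasDerivAt_pi.mp hx
  have h : HasDerivAt
      (fun t => ∑ i, star (x t i) * ∑ j, B i j * x t j)
      (∑ i, (star (v i) * ∑ j, B i j * x θ j + star (x θ i) * ∑ j, B i j * v j)) θ := by
    refine HasDerivAt.fun_sum fun i _ => ?_
    exact ((hcomp i).star).mul (HasDerivAt.fun_sum fun j _ => (hcomp j).const_mul (B i j))
  have := h
  simp only [Finset.sum_add_distrib] at this
  convert this using 2 <;> rfl

/-- If x(θ) is a differentiable family of unit eigenvectors of Re(e^{-iθ}A) with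
eigenvalue λ(θ), then the critical curve z(θ) = x(θ)*Ax(θ) satisfies
z(θ) = e^{iθ}(λ(θ) + i λ'(θ)). -/
theorem critical_curve_formula (n : ℕ) (A : Matrix (Fin n) (Fin n) ℂ)
    (x : ℝ → Fin n → ℂ) (lam lam' : ℝ → ℝ)
    (hx : Differentiable ℝ x)
    (hunit : ∀ θ : ℝ, star (x θ) ⬝ᵥ x θ = 1)
    (heig : ∀ θ : ℝ,
      (((2 : ℂ)⁻¹) • (Complex.exp (-(θ : ℂ) * Complex.I) • A +
        (Complex.exp (-(θ : ℂ) * Complex.I) • A)ᴴ)) *ᵥ x θ = (lam θ : ℂ) • x θ)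
    (hlam : ∀ θ : ℝ, HasDerivAt lam (lam' θ) θ) :
    ∀ θ : ℝ, star (x θ) ⬝ᵥ (A *ᵥ x θ) =
      Complex.exp ((θ : ℂ) * Complex.I) * ((lam θ : ℂ) + Complex.I * (lam' θ : ℂ)) := by
  -- notation
  set F : ℝ → ℂ := fun t => star (x t) ⬝ᵥ (A *ᵥ x t) with hF
  have hstarc : ∀ t : ℝ, star (Complex.exp (-(t : ℂ) * Complex.I)) =
      Complex.exp ((t : ℂ) * Complex.I) := by
    intro t
    rw [Complex.star_def, ← Complex.exp_conj]
    congr 1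
    simp [Complex.conj_I]
  -- eigen equation, rearranged: N t *ᵥ x t = 2 lam t • x t, with N t = c•A + E•Aᴴ
  have hN : ∀ t : ℝ,
      (Complex.exp (-(t : ℂ) * Complex.I) • A +
        Complex.exp ((t : ℂ) * Complex.I) • Aᴴ) *ᵥ x t = ((2 * lam t : ℂ)) • x t := by
    intro t
    have h := heig t
    rw [Matrix.smul_mulVec] at h
    have h' := (inv_smul_eq_iff₀ (by norm_num : (2 : ℂ) ≠ 0)).mp h
    rw [← hstarc t, ← Matrix.conjTranspose_smul, h', smul_smul]
  -- g t = c * F t + E * conj (F t) = 2 * lam t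
  have hg : ∀ t : ℝ, Complex.exp (-(t : ℂ) * Complex.I) * F t +
      Complex.exp ((t : ℂ) * Complex.I) * star (F t) = 2 * lam t := by
    intro t
    have hd := congrArg (fun w => star (x t) ⬝ᵥ w) (hN t)
    simp only [Matrix.add_mulVec, Matrix.smul_mulVec, dotProduct_add,
      dotProduct_smul, smul_eq_mul] at hd
    rw [hunit t] at hd
    rw [← conj_quad A (x t) (x t)] at hd
    simpa using hd
  intro θ
  -- derivative data
  set v : Fin n → ℂ := deriv x θ with hv
  have hxθ : HasDerivAt x v θ := (hx θ).hasDerivAt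
  -- derivative of unit condition
  have hsum0 : star v ⬝ᵥ x θ + star (x θ) ⬝ᵥ v = 0 := by
    have h1 : HasDerivAt (fun t => star (x t) ⬝ᵥ ((1 : Matrix (Fin n) (Fin n) ℂ) *ᵥ x t))
        (star v ⬝ᵥ ((1 : Matrix (Fin n) (Fin n) ℂ) *ᵥ x θ) +
          star (x θ) ⬝ᵥ ((1 : Matrix (Fin n) (Fin n) ℂ) *ᵥ v)) θ :=
      hasDerivAt_quad 1 x v θ hxθ
    simp only [Matrix.one_mulVec] at h1
    have h2 : HasDerivAt (fun t => star (x t) ⬝ᵥ x t) (0 : ℂ) θ := by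
      have : (fun t => star (x t) ⬝ᵥ x t) = fun _ : ℝ => (1 : ℂ) := funext hunit
      rw [this]; exact hasDerivAt_const θ 1
    exact h1.unique h2
  -- derivative of F
  have hFd : HasDerivAt F (star v ⬝ᵥ (A *ᵥ x θ) + star (x θ) ⬝ᵥ (A *ᵥ v)) θ :=
    hasDerivAt_quad A x v θ hxθ
  set a' : ℂ := star v ⬝ᵥ (A *ᵥ x θ) + star (x θ) ⬝ᵥ (A *ᵥ v) with ha'
  set a : ℂ := F θ with ha
  set c : ℂ := Complex.exp (-(θ : ℂ) * Complex.I) with hc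
  set E : ℂ := Complex.exp ((θ : ℂ) * Complex.I) with hE
  have hcE : c * E = 1 := by
    rw [hc, hE, ← Complex.exp_add]; ring_nf; exact Complex.exp_zero
  -- derivatives of exponentials
  have hexp1 : HasDerivAt (fun t : ℝ => Complex.exp (-(t : ℂ) * Complex.I))
      (c * -Complex.I) θ := by
    have hin : HasDerivAt (fun t : ℝ => -(t : ℂ) * Complex.I) (-Complex.I) θ := by
      have := (((hasDerivAt_id θ).ofReal_comp).mul_const Complex.I).neg
      simpa [neg_mul, Pi.neg_def] using this
    rw [hc]
    exact hin.cexp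
  have hexp2 : HasDerivAt (fun t : ℝ => Complex.exp ((t : ℂ) * Complex.I))
      (E * Complex.I) θ := by
    have hin : HasDerivAt (fun t : ℝ => (t : ℂ) * Complex.I) (Complex.I) θ := by
      have := ((hasDerivAt_id θ).ofReal_comp).mul_const Complex.I
      simpa using this
    rw [hE]
    exact hin.cexp
  -- the full derivative of g
  have hgd : HasDerivAt (fun t : ℝ => Complex.exp (-(t : ℂ) * Complex.I) * F t +
      Complex.exp ((t : ℂ) * Complex.I) * star (F t))
      ((c * -Complex.I) * a + c * a' + ((E * Complex.I) * star a + E * star a')) θ :=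
    (hexp1.mul hFd).add (hexp2.mul hFd.star)
  have hgconst : HasDerivAt (fun t : ℝ => Complex.exp (-(t : ℂ) * Complex.I) * F t +
      Complex.exp ((t : ℂ) * Complex.I) * star (F t)) ((2 : ℂ) * lam' θ) θ := by
    have : (fun t : ℝ => Complex.exp (-(t : ℂ) * Complex.I) * F t +
        Complex.exp ((t : ℂ) * Complex.I) * star (F t)) = fun t : ℝ => (2 : ℂ) * ((lam t : ℝ) : ℂ) :=
      funext fun t : ℝ => by rw [hg t]
    rw [this]
    exact ((hlam θ).ofReal_comp).const_mul 2
  have eq2 : (c * -Complex.I) * a + c * a' + ((E * Complex.I) * star a + E * star a')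
      = 2 * lam' θ := hgd.unique hgconst
  -- eq3 : c * a' + E * star a' = 0
  have eq3 : c * a' + E * star a' = 0 := by
    have hconj1 : star (star v ⬝ᵥ (A *ᵥ x θ)) = star (x θ) ⬝ᵥ (Aᴴ *ᵥ v) := conj_quad A v (x θ)
    have hconj2 : star (star (x θ) ⬝ᵥ (A *ᵥ v)) = star v ⬝ᵥ (Aᴴ *ᵥ x θ) := conj_quad A (x θ) v
    have hsa' : star a' = star (x θ) ⬝ᵥ (Aᴴ *ᵥ v) + star v ⬝ᵥ (Aᴴ *ᵥ x θ) := by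
      rw [ha', star_add, hconj1, hconj2]
    have expand : c * a' + E * star a' =
        star v ⬝ᵥ ((c • A + E • Aᴴ) *ᵥ x θ) + star (x θ) ⬝ᵥ ((c • A + E • Aᴴ) *ᵥ v) := by
      rw [ha', hsa']
      simp only [Matrix.add_mulVec, Matrix.smul_mulVec, dotProduct_add,
        dotProduct_smul, smul_eq_mul]
      ring
    rw [expand]
    have hNx : (c • A + E • Aᴴ) *ᵥ x θ = ((2 * lam θ : ℂ)) • x θ := hN θ
    have hherm : (c • A + E • Aᴴ)ᴴ = c • A + E • Aᴴ := by
      rw [conjTranspose_add, conjTranspose_smul, conjTranspose_smul, conjTranspose_conjTranspose]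
      rw [hc, hE, hstarc θ]
      have : star (Complex.exp ((θ : ℂ) * Complex.I)) = Complex.exp (-(θ : ℂ) * Complex.I) := by
        rw [Complex.star_def, ← Complex.exp_conj]; congr 1; simp [Complex.conj_I]
      rw [this, add_comm]
    have hterm2 : star (x θ) ⬝ᵥ ((c • A + E • Aᴴ) *ᵥ v) = (2 * lam θ : ℂ) * (star (x θ) ⬝ᵥ v) := by
      have := conj_quad (c • A + E • Aᴴ)ᴴ v (x θ)
      rw [conjTranspose_conjTranspose, hherm, hNx] at this
      rw [← this]
      simp only [dotProduct_smul, smul_eq_mul, star_mul']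
      congr 1
      · simp [Complex.star_def, Complex.conj_ofReal]
      · rw [star_dotProduct]; simp
    rw [hNx, hterm2, dotProduct_smul, smul_eq_mul, ← mul_add, hsum0, mul_zero]
  -- eq1
  have eq1 : c * a + E * star a = 2 * lam θ := hg θ
  -- solve
  have h4 : c * a = (lam θ : ℂ) + Complex.I * lam' θ := by
    linear_combination (1/2 : ℂ) * eq1 + (Complex.I/2) * eq2 - (Complex.I/2) * eq3 +
      ((1/2) * (c * a) - (1/2) * (E * star a)) * Complex.I_sq
  show a = E * ((lam θ : ℂ) + Complex.I * lam' θ)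
  linear_combination E * h4 - a * hcE
end

section
/- Let x: I → ℂⁿ be a real-analytic function on an interval I that is not identically zero. Then there exists a continuous function y: I → ℂⁿ such that for every t ∈ I with x(t) ≠ 0, y(t) = x(t)/‖x(t)‖ or y(t) = −x(t)/‖x(t)‖, and ‖y(t)‖ = 1 for all t ∈ I. -/
set_option linter.unusedSectionVars false
set_option linter.unusedVariables false
set_option maxHeartbeats 1000000

open Set Filter Metric Topology

section CssAux

variable {E : Type*} [NormedAddCommGroup E] [NormedSpace ℝ E] [CompleteSpace E]

/-- A continuous sign-selection of `x` on `S`. -/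
def CssSel (x : ℝ → E) (S : Set ℝ) (y : ℝ → E) : Prop :=
  ContinuousOn y S ∧
    (∀ t ∈ S, x t ≠ 0 → y t = ‖x t‖⁻¹ • x t ∨ y t = -(‖x t‖⁻¹ • x t)) ∧
    ∀ t ∈ S, ‖y t‖ = 1

lemma CssSel.mono' {x : ℝ → E} {S T : Set ℝ} {y : ℝ → E} (h : CssSel x S y) (hTS : T ⊆ S) :
    CssSel x T y :=
  ⟨h.1.mono hTS, fun t ht => h.2.1 t (hTS ht), fun t ht => h.2.2 t (hTS ht)⟩

lemma CssSel.neg' {x : ℝ → E} {S : Set ℝ} {y : ℝ → E} (h : CssSel x S y) :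
    CssSel x S (fun t => -(y t)) := by
  refine ⟨h.1.neg, fun t ht hxt => ?_, fun t ht => by simp [h.2.2 t ht]⟩
  rcases h.2.1 t ht hxt with h' | h' <;> simp [h']

lemma css_norm_normalize' {v : E} (hv : v ≠ 0) : ‖‖v‖⁻¹ • v‖ = 1 := by
  rw [norm_smul, norm_inv, norm_norm, inv_mul_cancel₀ (norm_ne_zero_iff.mpr hv)]


variable {x : ℝ → E} {I : Set ℝ} {t₀ : ℝ}

/-- If `x` vanishes on a nondegenerate open subinterval of `I`, it vanishes at `t₀`. -/
lemma css_zero_patch {t₀ : ℝ} (hI : OrdConnected I) (hx : AnalyticOn ℝ x I) (ht₀ : t₀ ∈ I)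
    (hxt₀ : x t₀ ≠ 0) {p q : ℝ} (hp : p ∈ I) (hq : q ∈ I) (hpq : p < q)
    (h0 : EqOn x 0 (Ioo p q)) : False := by
  set u := min p t₀ with hu
  set v := max q t₀ with hv
  have huI : u ∈ I := by rcases min_cases p t₀ with ⟨h, -⟩ | ⟨h, -⟩ <;> rw [hu, h] <;> assumption
  have hvI : v ∈ I := by rcases max_cases q t₀ with ⟨h, -⟩ | ⟨h, -⟩ <;> rw [hv, h] <;> assumption
  have hIccI : Icc u v ⊆ I := hI.out huI hvI
  obtain ⟨w, hw⟩ : (Ioo p q).Nonempty := nonempty_Ioo.mpr hpq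
  have hup : u ≤ p := min_le_left _ _
  have hqv : q ≤ v := le_max_left _ _
  have hwuv : w ∈ Ioo u v := ⟨lt_of_le_of_lt hup hw.1, lt_of_lt_of_le hw.2 hqv⟩
  have huv : u < v := hwuv.1.trans hwuv.2
  have hAN : AnalyticOnNhd ℝ x (Ioo u v) := by
    intro z hz
    have hIz : I ∈ 𝓝 z := mem_of_superset (Icc_mem_nhds hz.1 hz.2) hIccI
    have := (hx z (hIccI (Ioo_subset_Icc_self hz))).mono_of_mem_nhdsWithin
      (by rw [nhdsWithin_univ]; exact hIz)
    exact analyticWithinAt_univ.mp this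
  have hzero : EqOn x 0 (Ioo u v) := by
    refine hAN.eqOn_zero_of_preconnected_of_eventuallyEq_zero isPreconnected_Ioo hwuv ?_
    exact eventually_of_mem (isOpen_Ioo.mem_nhds hw) h0
  have ht₀uv : t₀ ∈ Icc u v := ⟨min_le_right _ _, le_max_right _ _⟩
  have hxt₀0 : x t₀ = 0 := by
    rcases eq_or_lt_of_le ht₀uv.1 with h | h
    · -- t₀ = u : approach from the right
      have hne : NeBot (𝓝[Ioo u v] t₀) := by
        rw [mem_closure_iff_nhdsWithin_neBot.symm, closure_Ioo huv.ne]
        exact ht₀uv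
      have h1 : Tendsto x (𝓝[Ioo u v] t₀) (𝓝 (x t₀)) :=
        ((hx t₀ ht₀).continuousWithinAt).mono (hIccI.trans' Ioo_subset_Icc_self)
      have h2 : Tendsto x (𝓝[Ioo u v] t₀) (𝓝 0) := by
        refine Tendsto.congr' ?_ tendsto_const_nhds
        filter_upwards [self_mem_nhdsWithin] with z hz
        exact (hzero hz).symm
      exact tendsto_nhds_unique h1 h2
    · rcases eq_or_lt_of_le ht₀uv.2 with h' | h'
      · have hne : NeBot (𝓝[Ioo u v] t₀) := by
          rw [mem_closure_iff_nhdsWithin_neBot.symm, closure_Ioo huv.ne]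
          exact ht₀uv
        have h1 : Tendsto x (𝓝[Ioo u v] t₀) (𝓝 (x t₀)) :=
          ((hx t₀ ht₀).continuousWithinAt).mono (hIccI.trans' Ioo_subset_Icc_self)
        have h2 : Tendsto x (𝓝[Ioo u v] t₀) (𝓝 0) := by
          refine Tendsto.congr' ?_ tendsto_const_nhds
          filter_upwards [self_mem_nhdsWithin] with z hz
          exact (hzero hz).symm
        exact tendsto_nhds_unique h1 h2
      · exact hzero ⟨h, h'⟩
  exact hxt₀ hxt₀0


/-- On a nondegenerate interval, a not-identically-zero analytic function is not locally zero. -/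
lemma css_not_loc_zero {t₀ : ℝ} (hI : OrdConnected I) (hx : AnalyticOn ℝ x I) (ht₀ : t₀ ∈ I)
    (hxt₀ : x t₀ ≠ 0) {t₁ : ℝ} (ht₁ : t₁ ∈ I) (hne : t₁ ≠ t₀) :
    ∀ a ∈ I, ¬ x =ᶠ[𝓝[I] a] 0 := by
  intro a ha h
  obtain ⟨δ, hδ, hball⟩ : ∃ δ > 0, ball a δ ∩ I ⊆ {s | x s = 0} :=
    Metric.mem_nhdsWithin_iff.mp h
  -- find c ∈ I, c ≠ a
  obtain ⟨c, hc, hca⟩ : ∃ c ∈ I, c ≠ a := by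
    by_cases h' : t₀ = a
    · exact ⟨t₁, ht₁, h' ▸ hne⟩
    · exact ⟨t₀, ht₀, h'⟩
  rcases hca.lt_or_gt with hlt | hlt
  · -- c < a : zero patch (max c (a - δ/2), a)
    set d := max c (a - δ/2) with hd
    have hda : d < a := max_lt hlt (by linarith)
    have hdI : d ∈ I := hI.out hc ha ⟨le_max_left _ _, hda.le⟩
    refine css_zero_patch hI hx ht₀ hxt₀ hdI ha hda ?_
    intro s hs
    have hsI : s ∈ I := hI.out hdI ha ⟨hs.1.le, hs.2.le⟩
    refine hball ⟨?_, hsI⟩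
    rw [mem_ball, Real.dist_eq, abs_lt]
    constructor
    · have : a - δ/2 ≤ d := le_max_right _ _
      linarith [hs.1]
    · linarith [hs.2]
  · -- a < c : zero patch (a, min c (a + δ/2))
    set d := min c (a + δ/2) with hd
    have had : a < d := lt_min hlt (by linarith)
    have hdI : d ∈ I := hI.out ha hc ⟨had.le, min_le_left _ _⟩
    refine css_zero_patch hI hx ht₀ hxt₀ ha hdI had ?_
    intro s hs
    have hsI : s ∈ I := hI.out ha hdI ⟨hs.1.le, hs.2.le⟩
    refine hball ⟨?_, hsI⟩
    rw [mem_ball, Real.dist_eq, abs_lt]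
    constructor
    · linarith [hs.1]
    · have : d ≤ a + δ/2 := min_le_right _ _
      linarith [hs.2]

/-- Local structure: near any point of `I`, `x s = (s-a)^m • u s` with `u` nonvanishing. -/
lemma css_local (hx : AnalyticOn ℝ x I) {a : ℝ} (ha : a ∈ I) (hH : ¬ x =ᶠ[𝓝[I] a] 0) :
    ∃ (m : ℕ) (u : ℝ → E) (ε : ℝ), 0 < ε ∧ ContinuousOn u (ball a ε) ∧
      (∀ s ∈ ball a ε, u s ≠ 0) ∧
      ∀ s ∈ I ∩ ball a ε, x s = (s - a) ^ m • u s := by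
  obtain ⟨g, hgx, hgeq, hg⟩ := (hx a ha).exists_analyticAt
  have horder : analyticOrderAt g a ≠ ⊤ := by
    intro htop
    rw [analyticOrderAt_eq_top] at htop
    refine hH ?_
    filter_upwards [nhdsWithin_le_nhds htop, self_mem_nhdsWithin] with z hz hzI
    simpa [hgeq (mem_insert_of_mem _ hzI)] using hz
  obtain ⟨m, hm⟩ := WithTop.ne_top_iff_exists.mp horder
  obtain ⟨u, hu_an, hu_ne, h_eq⟩ := hg.analyticOrderAt_eq_natCast.mp hm.symm
  have hev : ∀ᶠ z in 𝓝 a, (g z = (z - a) ^ m • u z ∧ u z ≠ 0) ∧ AnalyticAt ℝ u z := by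
    filter_upwards [h_eq, hu_an.continuousAt.eventually_ne hu_ne,
      hu_an.eventually_analyticAt] with z h1 h2 h3
    exact ⟨⟨h1, h2⟩, h3⟩
  obtain ⟨ε, hε, hball⟩ := Metric.eventually_nhds_iff_ball.mp hev
  refine ⟨m, u, ε, hε, ?_, fun s hs => ((hball s hs).1).2, fun s hs => ?_⟩
  · exact fun s hs => ((hball s hs).2).continuousAt.continuousWithinAt
  · rw [hgeq (mem_insert_of_mem _ hs.1)]
    exact ((hball s hs.2).1).1

/-- Zeros are isolated. -/
lemma css_evtl_ne (hx : AnalyticOn ℝ x I) {a : ℝ} (ha : a ∈ I) (hH : ¬ x =ᶠ[𝓝[I] a] 0) :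
    ∀ᶠ s in 𝓝[I \ {a}] a, x s ≠ 0 := by
  obtain ⟨m, u, ε, hε, hu_cont, hu_ne, hfac⟩ := css_local hx ha hH
  filter_upwards [nhdsWithin_le_nhds (ball_mem_nhds a hε), self_mem_nhdsWithin] with s hs hs'
  rw [hfac s ⟨hs'.1, hs⟩]
  exact smul_ne_zero (pow_ne_zero _ (sub_ne_zero.mpr (fun h => hs'.2 h))) (hu_ne s hs)

/-- Local continuous sign selection. -/
lemma css_local_sel (hx : AnalyticOn ℝ x I) {a : ℝ} (ha : a ∈ I) (hH : ¬ x =ᶠ[𝓝[I] a] 0) :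
    ∃ ε > 0, ∃ y, CssSel x (I ∩ ball a ε) y := by
  obtain ⟨m, u, ε, hε, hu_cont, hu_ne, hfac⟩ := css_local hx ha hH
  refine ⟨ε, hε, fun s => ‖u s‖⁻¹ • u s, ?_, fun s hs hxs => ?_, fun s hs => ?_⟩
  · have h1 : ContinuousOn u (I ∩ ball a ε) := hu_cont.mono inter_subset_right
    exact (h1.norm.inv₀ (fun s hs => norm_ne_zero_iff.mpr (hu_ne s hs.2))).smul h1
  · -- sign property
    have hx_eq : x s = (s - a) ^ m • u s := hfac s hs
    set r : ℝ := (s - a) ^ m with hr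
    have hr0 : r ≠ 0 := by
      intro h0
      rw [hx_eq, h0, zero_smul] at hxs
      exact hxs rfl
    have hc0 : ‖u s‖ ≠ 0 := norm_ne_zero_iff.mpr (hu_ne s hs.2)
    have hnorm : ‖x s‖ = |r| * ‖u s‖ := by
      rw [hx_eq, norm_smul, Real.norm_eq_abs]
    rcases abs_cases r with ⟨habs, -⟩ | ⟨habs, -⟩
    · left
      show ‖u s‖⁻¹ • u s = ‖x s‖⁻¹ • x s
      rw [hnorm, hx_eq, habs, smul_smul]
      congr 1
      field_simp
    · right
      show ‖u s‖⁻¹ • u s = -(‖x s‖⁻¹ • x s)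
      rw [hnorm, hx_eq, habs, smul_smul, ← neg_smul]
      congr 1
      field_simp
  · exact by
      rw [norm_smul, norm_inv, norm_norm,
        inv_mul_cancel₀ (norm_ne_zero_iff.mpr (hu_ne s hs.2))]

/-- Pointwise ± at a point. -/
lemma css_pointwise {S : Set ℝ} {y₁ y₂ : ℝ → E} (hSI : S ⊆ I)
    (hy₁ : CssSel x S y₁) (hy₂ : CssSel x S y₂) {t : ℝ} (ht : t ∈ S)
    (hcase : x t ≠ 0 ∨ ((𝓝[S \ {t}] t).NeBot ∧ ∀ᶠ s in 𝓝[I \ {t}] t, x s ≠ 0)) :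
    y₁ t = y₂ t ∨ y₁ t = -(y₂ t) := by
  have hpt : ∀ s ∈ S, x s ≠ 0 → y₁ s = y₂ s ∨ y₁ s = -(y₂ s) := by
    intro s hs hxs
    rcases hy₁.2.1 s hs hxs with h1 | h1 <;> rcases hy₂.2.1 s hs hxs with h2 | h2 <;>
      simp [h1, h2]
  rcases hcase with hxt | ⟨hnb, hev⟩
  · exact hpt t ht hxt
  · have hmono : 𝓝[S \ {t}] t ≤ 𝓝[I \ {t}] t :=
      nhdsWithin_mono _ (diff_subset_diff_left hSI)
    have hev' : ∀ᶠ s in 𝓝[S \ {t}] t, y₁ s = y₂ s ∨ y₁ s = -(y₂ s) := by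
      filter_upwards [hev.filter_mono hmono, self_mem_nhdsWithin] with s h1 h2
      exact hpt s h2.1 h1
    rcases frequently_or_distrib.mp hev'.frequently with hfreq | hfreq
    · left
      have hnb' : NeBot (𝓝[S \ {t}] t ⊓ 𝓟 {s | y₁ s = y₂ s}) := by
        rwa [← frequently_iff_neBot]
      set l := 𝓝[S \ {t}] t ⊓ 𝓟 {s | y₁ s = y₂ s}
      have hle : l ≤ 𝓝[S] t :=
        le_trans inf_le_left (nhdsWithin_mono _ diff_subset)
      have T1 : Tendsto y₁ l (𝓝 (y₁ t)) := (hy₁.1 t ht).mono_left hle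
      have T2 : Tendsto y₂ l (𝓝 (y₂ t)) := (hy₂.1 t ht).mono_left hle
      have T1' : Tendsto y₂ l (𝓝 (y₁ t)) := by
        refine T1.congr' ?_
        exact eventually_inf_principal.mpr (Eventually.of_forall (fun s h => h))
      exact tendsto_nhds_unique T1' T2
    · right
      have hnb' : NeBot (𝓝[S \ {t}] t ⊓ 𝓟 {s | y₁ s = -(y₂ s)}) := by
        rwa [← frequently_iff_neBot]
      set l := 𝓝[S \ {t}] t ⊓ 𝓟 {s | y₁ s = -(y₂ s)}
      have hle : l ≤ 𝓝[S] t :=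
        le_trans inf_le_left (nhdsWithin_mono _ diff_subset)
      have T1 : Tendsto y₁ l (𝓝 (y₁ t)) := (hy₁.1 t ht).mono_left hle
      have T2 : Tendsto (fun s => -(y₂ s)) l (𝓝 (-(y₂ t))) :=
        ((hy₂.1 t ht).mono_left hle).neg
      have T1' : Tendsto (fun s => -(y₂ s)) l (𝓝 (y₁ t)) := by
        refine T1.congr' ?_
        exact eventually_inf_principal.mpr (Eventually.of_forall (fun s h => h))
      exact tendsto_nhds_unique T1' T2

/-- Global ± on a preconnected set, given pointwise ±. -/
lemma css_global_pm {S : Set ℝ} {y₁ y₂ : ℝ → E} (hS : IsPreconnected S)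
    (hy₁ : CssSel x S y₁) (hy₂ : CssSel x S y₂)
    (hpt : ∀ s ∈ S, y₁ s = y₂ s ∨ y₁ s = -(y₂ s)) :
    EqOn y₁ y₂ S ∨ EqOn y₁ (fun s => -(y₂ s)) S := by
  set f : ℝ → ℝ := fun s => ‖y₁ s - y₂ s‖ with hf
  have hfc : ContinuousOn f S := (hy₁.1.sub hy₂.1).norm
  have hdichot : ∀ s ∈ S, f s = 0 ∨ f s = 2 := by
    intro s hs
    rcases hpt s hs with h | h
    · left; simp [hf, h]
    · right
      have hval : y₁ s - y₂ s = -((2:ℝ) • y₂ s) := by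
        rw [h, two_smul]; abel
      rw [hf]
      simp only [hval, norm_neg, norm_smul, hy₂.2.2 s hs]
      norm_num
  by_cases hall : ∀ s ∈ S, f s = 0
  · left
    intro s hs
    have := hall s hs
    rw [hf] at this
    simpa [sub_eq_zero] using norm_eq_zero.mp this
  · right
    push_neg at hall
    obtain ⟨s₂, hs₂, hfs₂⟩ := hall
    have hfs₂2 : f s₂ = 2 := (hdichot s₂ hs₂).resolve_left hfs₂
    have hall2 : ∀ s ∈ S, f s = 2 := by
      intro s hs
      by_contra hfs
      have hfs0 : f s = 0 := (hdichot s hs).resolve_right hfs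
      have h1 : (1 : ℝ) ∈ Icc (f s) (f s₂) := by rw [hfs0, hfs₂2]; norm_num
      obtain ⟨z, hz, hfz⟩ := hS.intermediate_value hs hs₂ hfc h1
      rcases hdichot z hz with h | h <;> rw [hfz] at h <;> norm_num at h
    intro s hs
    have h2 := hall2 s hs
    rcases hpt s hs with h | h
    · rw [hf] at h2
      simp only [h, sub_self, norm_zero] at h2
      norm_num at h2
    · exact h

/-- Two selections on `Icc a b` agree up to a global sign. -/
lemma css_icc_pm (hI : OrdConnected I) (hx : AnalyticOn ℝ x I)
    (hH : ∀ a ∈ I, ¬ x =ᶠ[𝓝[I] a] 0) {a b : ℝ} (ha : a ∈ I) (hb : b ∈ I) (hab : a ≤ b)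
    {y₁ y₂ : ℝ → E} (hy₁ : CssSel x (Icc a b) y₁) (hy₂ : CssSel x (Icc a b) y₂)
    (hnd : a < b ∨ ∀ s ∈ Icc a b, x s ≠ 0) :
    EqOn y₁ y₂ (Icc a b) ∨ EqOn y₁ (fun s => -(y₂ s)) (Icc a b) := by
  have hIccI : Icc a b ⊆ I := hI.out ha hb
  refine css_global_pm isPreconnected_Icc hy₁ hy₂ (fun s hs => ?_)
  by_cases hxs : x s ≠ 0
  · exact css_pointwise hIccI hy₁ hy₂ hs (Or.inl hxs)
  · rcases hnd with hlt | hall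
    · refine css_pointwise hIccI hy₁ hy₂ hs (Or.inr ⟨?_, css_evtl_ne hx (hIccI hs) (hH s (hIccI hs))⟩)
      -- NeBot of punctured nbhd within Icc a b
      rcases lt_or_eq_of_le hs.2 with hsb | hsb
      · have h1 : s ∈ closure (Ioo s b) := by
          rw [closure_Ioo hsb.ne]; exact ⟨le_refl s, hsb.le⟩
        have h2 : NeBot (𝓝[Ioo s b] s) := mem_closure_iff_nhdsWithin_neBot.mp h1
        refine h2.mono (nhdsWithin_mono _ ?_)
        intro z hz
        exact ⟨⟨hs.1.trans hz.1.le, hz.2.le⟩, (ne_of_gt hz.1)⟩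
      · have hsa : a < s := hsb ▸ hlt
        have h1 : s ∈ closure (Ioo a s) := by
          rw [closure_Ioo hsa.ne]; exact ⟨hsa.le, le_refl s⟩
        have h2 : NeBot (𝓝[Ioo a s] s) := mem_closure_iff_nhdsWithin_neBot.mp h1
        refine h2.mono (nhdsWithin_mono _ ?_)
        intro z hz
        exact ⟨⟨hz.1.le, hz.2.le.trans hs.2⟩, (ne_of_lt hz.2)⟩
    · exact absurd (hall s hs) hxs

/-- Existence of a selection on any `Icc a b ⊆ I`. -/
lemma css_exists_icc (hI : OrdConnected I) (hx : AnalyticOn ℝ x I)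
    (hH : ∀ a ∈ I, ¬ x =ᶠ[𝓝[I] a] 0) (v₀ : E) (hv₀ : ‖v₀‖ = 1)
    {a b : ℝ} (ha : a ∈ I) (hb : b ∈ I) (hab : a ≤ b) :
    ∃ y, CssSel x (Icc a b) y := by
  classical
  have hIccI : Icc a b ⊆ I := hI.out ha hb
  set A : Set ℝ := {c | c ∈ Icc a b ∧ ∃ y, CssSel x (Icc a c) y} with hA
  have hA0 : a ∈ A := by
    refine ⟨⟨le_refl a, hab⟩, fun _s => if x a ≠ 0 then ‖x a‖⁻¹ • x a else v₀, ?_⟩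
    rw [Icc_self]
    refine ⟨continuousOn_const, fun t ht hxt => ?_, fun t ht => ?_⟩
    · rw [mem_singleton_iff] at ht
      rw [ht] at hxt ⊢
      left
      show (if x a ≠ 0 then ‖x a‖⁻¹ • x a else v₀) = ‖x a‖⁻¹ • x a
      rw [if_pos hxt]
    · rw [mem_singleton_iff] at ht
      rw [ht]
      show ‖if x a ≠ 0 then ‖x a‖⁻¹ • x a else v₀‖ = 1
      by_cases hxa : x a ≠ 0
      · rw [if_pos hxa, norm_smul, norm_inv, norm_norm,
          inv_mul_cancel₀ (norm_ne_zero_iff.mpr hxa)]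
      · rw [if_neg hxa]; exact hv₀
  have hAne : A.Nonempty := ⟨a, hA0⟩
  have hAbdd : BddAbove A := (bddAbove_Icc (a := a) (b := b)).mono (fun z hz => hz.1)
  set c := sSup A with hc
  have hcA : a ≤ c := le_csSup hAbdd hA0
  have hcb : c ≤ b := csSup_le hAne (fun z hz => hz.1.2)
  have hcab : c ∈ Icc a b := ⟨hcA, hcb⟩
  have hcI : c ∈ I := hIccI hcab
  obtain ⟨ε, hε, yl, hyl⟩ := css_local_sel hx hcI (hH c hcI)
  set M := min b (c + ε / 2) with hM
  have hcM : c ≤ M := le_min hcb (by linarith)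
  have haM : a ≤ M := hcA.trans hcM
  have hMb : M ≤ b := min_le_left _ _
  have hMab : M ∈ Icc a b := ⟨haM, hMb⟩
  set l := max a (c - ε / 2) with hl
  have hla : a ≤ l := le_max_left _ _
  have hlc : l ≤ c := max_le hcA (by linarith)
  have hlab : l ∈ Icc a b := ⟨hla, hlc.trans hcb⟩
  have hlM : l ≤ M := hlc.trans hcM
  have hDball : Icc l M ⊆ I ∩ ball c ε := by
    intro z hz
    refine ⟨hIccI ⟨hla.trans hz.1, hz.2.trans hMb⟩, ?_⟩
    rw [mem_ball, Real.dist_eq, abs_lt]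
    have h1 : c - ε/2 ≤ l := le_max_right _ _
    have h2 : M ≤ c + ε/2 := min_le_right _ _
    constructor
    · have := h1.trans hz.1
      linarith
    · have := hz.2.trans h2
      linarith
  have hylD : CssSel x (Icc l M) yl := hyl.mono' hDball
  -- get b' ∈ A with c - ε/2 < b'
  obtain ⟨b', hb'A, hb'1⟩ : ∃ b' ∈ A, c - ε / 2 < b' := by
    by_cases hca' : c - ε / 2 < a
    · exact ⟨a, hA0, hca'⟩
    · push_neg at hca'
      obtain ⟨b', hb'A, hb'⟩ := exists_lt_of_lt_csSup hAne (show c - ε/2 < sSup A by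
        rw [← hc]; linarith)
      exact ⟨b', hb'A, hb'⟩
  have hb'c : b' ≤ c := le_csSup hAbdd hb'A
  have hab' : a ≤ b' := hb'A.1.1
  have hb'M : b' ≤ M := hb'c.trans hcM
  obtain ⟨y₁, hy₁⟩ := hb'A.2
  have hlleb' : l ≤ b' := max_le hab' hb'1.le
  -- main claim: M ∈ A
  have hMA : M ∈ A := by
    rcases eq_or_lt_of_le hlleb' with hlb | hlb
    · -- l = b' : then l = a, and yl alone works on Icc a M
      have hla' : l = a := by
        rcases max_cases a (c - ε / 2) with ⟨h1, -⟩ | ⟨h1, -⟩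
        · rw [hl, h1]
        · exfalso
          rw [hl, h1] at hlb
          exact absurd hlb.symm (ne_of_gt hb'1)
      refine ⟨hMab, yl, ?_⟩
      rw [← hla']
      exact hylD
    · -- overlap Icc l b' nondegenerate
      have hOsub₁ : Icc l b' ⊆ Icc a b' := Icc_subset_Icc hla (le_refl _)
      have hOsub₂ : Icc l b' ⊆ Icc l M := Icc_subset_Icc (le_refl _) hb'M
      have hlI : l ∈ I := hIccI hlab
      have hb'I : b' ∈ I := hIccI hb'A.1
      have hpm := css_icc_pm hI hx hH hlI hb'I hlb.le (hy₁.mono' hOsub₁) (hylD.mono' hOsub₂)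
        (Or.inl hlb)
      obtain ⟨y₂, hy₂D, hy₂eq⟩ : ∃ y₂, CssSel x (Icc l M) y₂ ∧ EqOn y₁ y₂ (Icc l b') := by
        rcases hpm with hpm | hpm
        · exact ⟨yl, hylD, hpm⟩
        · exact ⟨fun s => -(yl s), hylD.neg', hpm⟩
      -- glue with clamping
      have hc₁mem : ∀ s : ℝ, min (max s a) b' ∈ Icc a b' := fun s =>
        ⟨le_min (le_max_right s a) hab', min_le_right _ _⟩
      have hc₂mem : ∀ s : ℝ, min (max s l) M ∈ Icc l M := fun s =>
        ⟨le_min (le_max_right s l) hlM, min_le_right _ _⟩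
      set Y : ℝ → E := fun s => if s ≤ b' then y₁ (min (max s a) b') else y₂ (min (max s l) M)
        with hYdef
      have hYc : Continuous Y := by
        refine Continuous.if_le ?_ ?_ continuous_id continuous_const ?_
        · exact hy₁.1.comp_continuous
            ((continuous_id.max continuous_const).min continuous_const) hc₁mem
        · exact hy₂D.1.comp_continuous
            ((continuous_id.max continuous_const).min continuous_const) hc₂mem
        · intro s hs
          have hs' : s = b' := hs
          rw [hs']
          have h1 : min (max b' a) b' = b' := by
            rw [max_eq_left hab', min_self]
          have h2 : min (max b' l) M = b' := by
            rw [max_eq_left hlleb', min_eq_left hb'M]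
          rw [h1, h2]
          exact hy₂eq ⟨hlleb', le_refl _⟩
      have hYeq₁ : ∀ s ∈ Icc a M, s ≤ b' → Y s = y₁ s := by
        intro s hs hsb'
        rw [hYdef]
        simp only [if_pos hsb']
        rw [max_eq_left hs.1, min_eq_left hsb']
      have hYeq₂ : ∀ s ∈ Icc a M, b' < s → Y s = y₂ s := by
        intro s hs hsb'
        rw [hYdef]
        simp only [if_neg (not_le.mpr hsb')]
        rw [max_eq_left (hlleb'.trans hsb'.le), min_eq_left hs.2]
      refine ⟨hMab, Y, hYc.continuousOn, fun s hs hxs => ?_, fun s hs => ?_⟩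
      · rcases le_or_gt s b' with h' | h'
        · rw [hYeq₁ s hs h']
          exact hy₁.2.1 s ⟨hs.1, h'⟩ hxs
        · rw [hYeq₂ s hs h']
          exact hy₂D.2.1 s ⟨hlleb'.trans h'.le, hs.2⟩ hxs
      · rcases le_or_gt s b' with h' | h'
        · rw [hYeq₁ s hs h']
          exact hy₁.2.2 s ⟨hs.1, h'⟩
        · rw [hYeq₂ s hs h']
          exact hy₂D.2.2 s ⟨hlleb'.trans h'.le, hs.2⟩
  -- conclude
  have hMc : M ≤ c := le_csSup hAbdd hMA
  have hcbeq : c = b := by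
    by_contra hne
    have hclt : c < b := lt_of_le_of_ne hcb hne
    have : c < M := lt_min hclt (by linarith)
    linarith
  have hMceq : M = b := by
    have h1 : M = c := le_antisymm hMc hcM
    rw [h1, hcbeq]
  rw [← hMceq]
  exact hMA.2

/-- Anchored uniqueness. -/
lemma css_unique (hI : OrdConnected I) (hx : AnalyticOn ℝ x I)
    (hH : ∀ a ∈ I, ¬ x =ᶠ[𝓝[I] a] 0) {a b t₀ : ℝ} (ha : a ∈ I) (hb : b ∈ I)
    (ht₀ : t₀ ∈ Icc a b) (hxt₀ : x t₀ ≠ 0) {y₁ y₂ : ℝ → E}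
    (hy₁ : CssSel x (Icc a b) y₁) (hy₂ : CssSel x (Icc a b) y₂)
    (hanch : y₁ t₀ = y₂ t₀) : EqOn y₁ y₂ (Icc a b) := by
  have hab : a ≤ b := ht₀.1.trans ht₀.2
  have hnd : a < b ∨ ∀ s ∈ Icc a b, x s ≠ 0 := by
    rcases lt_or_eq_of_le hab with h | h
    · exact Or.inl h
    · right
      intro s hs
      have hs' : s = a := le_antisymm (h ▸ hs.2) hs.1
      have ht₀' : t₀ = a := le_antisymm (h ▸ ht₀.2) ht₀.1
      rw [hs', ← ht₀']
      exact hxt₀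
  rcases css_icc_pm hI hx hH ha hb hab hy₁ hy₂ hnd with h | h
  · exact h
  · exfalso
    have h1 : y₁ t₀ = -(y₂ t₀) := h ht₀
    rw [hanch] at h1
    have h2 : y₂ t₀ = 0 := by
      have h3 : (2:ℝ) • y₂ t₀ = 0 := by
        rw [two_smul]
        nth_rewrite 1 [h1]
        abel
      rcases smul_eq_zero.mp h3 with h | h
      · norm_num at h
      · exact h
    have h3 := hy₂.2.2 t₀ ht₀
    rw [h2, norm_zero] at h3
    norm_num at h3

/-- Main theorem, general form. -/
theorem css_main (hI : OrdConnected I) (hx : AnalyticOn ℝ x I) (hne : ∃ t ∈ I, x t ≠ 0) :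
    ∃ y : ℝ → E, ContinuousOn y I ∧
      (∀ t ∈ I, x t ≠ 0 → y t = ‖x t‖⁻¹ • x t ∨ y t = -(‖x t‖⁻¹ • x t)) ∧
      ∀ t ∈ I, ‖y t‖ = 1 := by
  classical
  obtain ⟨t₀, ht₀, hxt₀⟩ := hne
  set v₀ : E := ‖x t₀‖⁻¹ • x t₀ with hv₀def
  have hv₀ : ‖v₀‖ = 1 := css_norm_normalize' hxt₀
  by_cases hdeg : ∀ t ∈ I, t = t₀
  · refine ⟨fun _ => v₀, continuousOn_const, fun t ht hxt => ?_, fun t ht => hv₀⟩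
    rw [hdeg t ht]
    exact Or.inl rfl
  · push_neg at hdeg
    obtain ⟨t₁, ht₁, hne₁⟩ := hdeg
    have hH := css_not_loc_zero hI hx ht₀ hxt₀ ht₁ hne₁
    have key2 : ∀ p q : ℝ, p ∈ I → q ∈ I → p ≤ t₀ → t₀ ≤ q →
        ∃ z, CssSel x (Icc p q) z ∧ z t₀ = v₀ := by
      intro p q hp hq hpt hqt
      obtain ⟨z, hz⟩ := css_exists_icc hI hx hH v₀ hv₀ hp hq (hpt.trans hqt)
      have ht₀m : t₀ ∈ Icc p q := ⟨hpt, hqt⟩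
      rcases hz.2.1 t₀ ht₀m hxt₀ with h | h
      · exact ⟨z, hz, h⟩
      · refine ⟨fun s => -(z s), hz.neg', ?_⟩
        show -(z t₀) = v₀
        rw [h, neg_neg]
    have hminI : ∀ t ∈ I, min t t₀ ∈ I := by
      intro t ht
      rcases min_cases t t₀ with ⟨h, -⟩ | ⟨h, -⟩ <;> rw [h] <;> assumption
    have hmaxI : ∀ t ∈ I, max t t₀ ∈ I := by
      intro t ht
      rcases max_cases t t₀ with ⟨h, -⟩ | ⟨h, -⟩ <;> rw [h] <;> assumption
    have key : ∀ t : ℝ, ∃ z : ℝ → E,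
        t ∈ I → CssSel x (Icc (min t t₀) (max t t₀)) z ∧ z t₀ = v₀ := by
      intro t
      by_cases ht : t ∈ I
      · obtain ⟨z, hz⟩ := key2 _ _ (hminI t ht) (hmaxI t ht) (min_le_right _ _) (le_max_right _ _)
        exact ⟨z, fun _ => hz⟩
      · exact ⟨fun _ => v₀, fun h => absurd h ht⟩
    choose Z hZ using key
    set y : ℝ → E := fun t => Z t t with hy
    have coh : ∀ t, t ∈ I → ∀ p q, p ∈ I → q ∈ I → p ≤ t₀ → t₀ ≤ q →
        p ≤ min t t₀ → max t t₀ ≤ q → ∀ z, CssSel x (Icc p q) z → z t₀ = v₀ →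
        y t = z t := by
      intro t ht p q hp hq hpt htq h1 h2 z hzsel hzanc
      have hZt := hZ t ht
      have hsub' : Icc (min t t₀) (max t t₀) ⊆ Icc p q := Icc_subset_Icc h1 h2
      have ht₀m : t₀ ∈ Icc (min t t₀) (max t t₀) := ⟨min_le_right _ _, le_max_right _ _⟩
      have := css_unique hI hx hH (hminI t ht) (hmaxI t ht) ht₀m hxt₀ hZt.1
        (hzsel.mono' hsub') (by rw [hZt.2, hzanc])
      exact this ⟨min_le_left _ _, le_max_left _ _⟩
    refine ⟨y, ?_, ?_, ?_⟩
    · intro t ht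
      obtain ⟨bb, hbbI, htbb, hbbmem⟩ : ∃ bb ∈ I, t ≤ bb ∧ Iic bb ∈ 𝓝[I] t := by
        by_cases h : ∃ b' ∈ I, t < b'
        · obtain ⟨b', hb', htb'⟩ := h
          exact ⟨b', hb', htb'.le, nhdsWithin_le_nhds (Iic_mem_nhds htb')⟩
        · push_neg at h
          exact ⟨t, ht, le_refl t, mem_of_superset self_mem_nhdsWithin (fun s hs => h s hs)⟩
      obtain ⟨aa, haaI, haat, haamem⟩ : ∃ aa ∈ I, aa ≤ t ∧ Ici aa ∈ 𝓝[I] t := by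
        by_cases h : ∃ a' ∈ I, a' < t
        · obtain ⟨a', ha', ha't⟩ := h
          exact ⟨a', ha', ha't.le, nhdsWithin_le_nhds (Ici_mem_nhds ha't)⟩
        · push_neg at h
          exact ⟨t, ht, le_refl t, mem_of_superset self_mem_nhdsWithin (fun s hs => h s hs)⟩
      have hIccmem : Icc aa bb ∈ 𝓝[I] t := by
        rw [← Ici_inter_Iic]
        exact inter_mem haamem hbbmem
      obtain ⟨z, hzsel, hzanc⟩ := key2 (min aa t₀) (max bb t₀) (hminI aa haaI)
        (hmaxI bb hbbI) (min_le_right _ _) (le_max_right _ _)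
      have htmem : t ∈ Icc (min aa t₀) (max bb t₀) :=
        ⟨(min_le_left _ _).trans haat, htbb.trans (le_max_left _ _)⟩
      have hzc : ContinuousWithinAt z I t := by
        have h1 : ContinuousWithinAt z (Icc (min aa t₀) (max bb t₀)) t := hzsel.1 t htmem
        exact h1.mono_of_mem_nhdsWithin (mem_of_superset hIccmem
          (Icc_subset_Icc (min_le_left _ _) (le_max_left _ _)))
      refine hzc.congr_of_eventuallyEq ?_ ?_
      · filter_upwards [hIccmem, self_mem_nhdsWithin] with s hsmem hsI
        exact coh s hsI (min aa t₀) (max bb t₀) (hminI aa haaI) (hmaxI bb hbbI)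
          (min_le_right _ _) (le_max_right _ _)
          (min_le_min hsmem.1 (le_refl t₀))
          (max_le_max hsmem.2 (le_refl t₀)) z hzsel hzanc
      · exact coh t ht (min aa t₀) (max bb t₀) (hminI aa haaI) (hmaxI bb hbbI)
          (min_le_right _ _) (le_max_right _ _) (min_le_min haat (le_refl t₀))
          (max_le_max htbb (le_refl t₀)) z hzsel hzanc
    · intro t ht hxt
      exact (hZ t ht).1.2.1 t ⟨min_le_left _ _, le_max_left _ _⟩ hxt
    · intro t ht
      exact (hZ t ht).1.2.2 t ⟨min_le_left _ _, le_max_left _ _⟩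

end CssAux

/-- If x : I → ℂⁿ is real-analytic on an interval I and not identically zero, there is a
continuous y : I → ℂⁿ with y(t) = ±x(t)/‖x(t)‖ wherever x(t) ≠ 0 and ‖y(t)‖ = 1 on I. -/
theorem continuous_sign_selection (n : ℕ) (I : Set ℝ) (hI : I.OrdConnected)
    (x : ℝ → EuclideanSpace ℂ (Fin n))
    (hx : AnalyticOn ℝ x I)
    (hne : ∃ t ∈ I, x t ≠ 0) :
    ∃ y : ℝ → EuclideanSpace ℂ (Fin n), ContinuousOn y I ∧
      (∀ t ∈ I, x t ≠ 0 → y t = ‖x t‖⁻¹ • x t ∨ y t = -(‖x t‖⁻¹ • x t)) ∧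
      ∀ t ∈ I, ‖y t‖ = 1 := by
  exact css_main hI hx hne
end

section
/- Elliptical Range Theorem: For any A ∈ M₂(ℂ), the numerical range F(A) is an ellipse together with its interior (possibly degenerating to a line segment or a point); in particular F(A) is the image of a Euclidean 2-sphere under a real affine map from ℝ³ to ℂ ≅ ℝ², hence a filled ellipse. -/
open Matrix Complex

private lemma sphere_iff (a b c : ℝ) :
    ((WithLp.equiv 2 (Fin 3 → ℝ)).symm ![a,b,c] : EuclideanSpace ℝ (Fin 3)) ∈
      Metric.sphere (0 : EuclideanSpace ℝ (Fin 3)) 1 ↔ a^2 + b^2 + c^2 = 1 := by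
  rw [mem_sphere_zero_iff_norm, EuclideanSpace.norm_eq]
  rw [show Real.sqrt (∑ i, ‖(WithLp.equiv 2 (Fin 3 → ℝ)).symm ![a,b,c] i‖^2)
      = Real.sqrt (a^2+b^2+c^2) by
    congr 1
    simp [Fin.sum_univ_three, PiLp.toLp_apply, WithLp.equiv_symm_apply, sq_abs]]
  constructor
  · intro h
    have := Real.sq_sqrt (by positivity : (0:ℝ) ≤ a^2+b^2+c^2)
    rw [h] at this; linarith
  · intro h; rw [h, Real.sqrt_one]

/-- Elliptical Range Theorem: for A ∈ M₂(ℂ), the numerical range F(A) is the image of the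
Euclidean unit 2-sphere in ℝ³ under a real affine map into ℂ, hence a filled ellipse
(possibly degenerating to a segment or point). -/
theorem elliptical_range_theorem (A : Matrix (Fin 2) (Fin 2) ℂ) :
    ∃ (L : EuclideanSpace ℝ (Fin 3) →L[ℝ] ℂ) (c : ℂ),
      {z : ℂ | ∃ x : Fin 2 → ℂ, star x ⬝ᵥ x = 1 ∧ star x ⬝ᵥ (A *ᵥ x) = z} =
        (fun r => L r + c) '' Metric.sphere (0 : EuclideanSpace ℝ (Fin 3)) 1 := by
  set α : ℂ := (A 0 1 + A 1 0) / 2 with hα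
  set β : ℂ := I * (A 0 1 - A 1 0) / 2 with hβ
  set γ : ℂ := (A 0 0 - A 1 1) / 2 with hγ
  set c : ℂ := (A 0 0 + A 1 1) / 2 with hc
  refine ⟨(EuclideanSpace.proj (0 : Fin 3)).smulRight α
    + (EuclideanSpace.proj (1 : Fin 3)).smulRight β
    + (EuclideanSpace.proj (2 : Fin 3)).smulRight γ, c, ?_⟩
  ext z
  simp only [Set.mem_setOf_eq, Set.mem_image, ContinuousLinearMap.add_apply,
    ContinuousLinearMap.smulRight_apply, EuclideanSpace.proj, PiLp.proj_apply]
  constructor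
  · rintro ⟨x, hx1, hx2⟩
    set a := x 0 with ha
    set b := x 1 with hb
    have hx1' : (starRingEnd ℂ) a * a + (starRingEnd ℂ) b * b = 1 := by
      simpa [dotProduct, Fin.sum_univ_two, ha, hb] using hx1
    set w : ℂ := (starRingEnd ℂ) a * b with hw
    have hre : (Complex.normSq a : ℝ) + Complex.normSq b = 1 := by
      have h3 : ((Complex.normSq a : ℝ) : ℂ) + ((Complex.normSq b : ℝ) : ℂ) = 1 := by
        rw [Complex.normSq_eq_conj_mul_self, Complex.normSq_eq_conj_mul_self]; exact hx1'
      exact_mod_cast h3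
    refine ⟨(WithLp.equiv 2 (Fin 3 → ℝ)).symm
      ![2 * w.re, 2 * w.im, Complex.normSq a - Complex.normSq b], ?_, ?_⟩
    · rw [sphere_iff]
      have hnw : w.re ^ 2 + w.im ^ 2 = Complex.normSq a * Complex.normSq b := by
        have h5 : Complex.normSq w = Complex.normSq a * Complex.normSq b := by
          simp [hw, Complex.normSq_mul]
        rw [← h5, Complex.normSq_apply]; ring
      nlinarith [hre, hnw]
    · simp only [PiLp.toLp_apply, WithLp.equiv_symm_apply, Matrix.cons_val_zero, Matrix.cons_val_one,
        Matrix.head_cons, Matrix.cons_val_two, Matrix.tail_cons]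
      rw [← hx2]
      have h1 : (2:ℂ) * w.re = w + (starRingEnd ℂ) w := by
        rw [Complex.add_conj]; push_cast; ring
      have h2 : (2:ℂ) * w.im * I = w - (starRingEnd ℂ) w := by
        rw [Complex.sub_conj]; push_cast; ring
      have h3 : ((Complex.normSq a : ℝ) : ℂ) = (starRingEnd ℂ) a * a :=
        Complex.normSq_eq_conj_mul_self
      have h4 : ((Complex.normSq b : ℝ) : ℂ) = (starRingEnd ℂ) b * b :=
        Complex.normSq_eq_conj_mul_self
      have hcw : (starRingEnd ℂ) w = a * (starRingEnd ℂ) b := by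
        simp [hw, mul_comm]
      rw [show star x ⬝ᵥ (A *ᵥ x) =
          (starRingEnd ℂ) a * (A 0 0 * a + A 0 1 * b) + (starRingEnd ℂ) b * (A 1 0 * a + A 1 1 * b) by
        simp [dotProduct, mulVec, Fin.sum_univ_two, ha, hb]]
      simp only [real_smul, Complex.ofReal_sub, Complex.ofReal_mul, Complex.ofReal_ofNat]
      rw [hα, hβ, hγ, hc]
      linear_combination (-(A 0 0 + A 1 1)/2) * hx1' + ((A 0 1 + A 1 0)/2) * h1
        + ((A 0 1 - A 1 0)/2) * h2 + ((A 0 0 - A 1 1)/2) * (h3 - h4)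
        + A 0 1 * hw + A 1 0 * hcw
  · rintro ⟨r, hr, hrz⟩
    set u := r 0 with hu
    set v := r 1 with hv
    set t := r 2 with ht
    have hsum : u^2 + v^2 + t^2 = 1 := by
      have h := mem_sphere_zero_iff_norm.mp hr
      rw [EuclideanSpace.norm_eq] at h
      rw [show (∑ i, ‖r i‖^2) = u^2 + v^2 + t^2 by
        simp [Fin.sum_univ_three, Real.norm_eq_abs, sq_abs, hu, hv, ht]] at h
      nlinarith [Real.sq_sqrt (by positivity : (0:ℝ) ≤ u^2+v^2+t^2)]
    rcases eq_or_lt_of_le (by nlinarith : (-1:ℝ) ≤ t) with htm | htm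
    · have hu0 : u = 0 := by nlinarith
      have hv0 : v = 0 := by nlinarith
      refine ⟨![0, 1], by simp [dotProduct, Fin.sum_univ_two], ?_⟩
      rw [← hrz, hu0, hv0, ← htm]
      simp [dotProduct, mulVec, Fin.sum_univ_two, hγ, hc]
      ring
    · set s := Real.sqrt ((1+t)/2) with hs
      have hp : (0:ℝ) < (1+t)/2 := by linarith
      have hs2 : s^2 = (1+t)/2 := Real.sq_sqrt hp.le
      have hs0 : (s:ℂ) ≠ 0 := by
        simp [Complex.ofReal_ne_zero]
        positivity
      have hsC : (s:ℂ)^2 = (1+(t:ℂ))/2 := by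
        have := congrArg (Complex.ofReal) hs2
        push_cast at this; exact this
      have hC : (u:ℂ)^2 + (v:ℂ)^2 + (t:ℂ)^2 = 1 := by exact_mod_cast congrArg Complex.ofReal hsum
      refine ⟨![(s:ℂ), ((u:ℂ) + v*I)/(2*s)], ?_, ?_⟩
      · rw [show (star ![(s:ℂ), ((u:ℂ) + v*I)/(2*s)] ⬝ᵥ ![(s:ℂ), ((u:ℂ) + v*I)/(2*s)])
            = (s:ℂ)*(s:ℂ) + (((u:ℂ) - v*I)/(2*s)) * (((u:ℂ) + v*I)/(2*s)) by
          simp [dotProduct, Fin.sum_univ_two, map_div₀, Complex.conj_ofReal, map_ofNat]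
          exact Or.inl (by ring)]
        field_simp
        linear_combination hC + 2*hsC - ((v:ℂ)^2) * Complex.I_sq + (4*(s:ℂ)^2 - 4 + 2*(t:ℂ)) * hsC
      · rw [← hrz]
        rw [show (star ![(s:ℂ), ((u:ℂ) + v*I)/(2*s)] ⬝ᵥ (A *ᵥ ![(s:ℂ), ((u:ℂ) + v*I)/(2*s)]))
            = (s:ℂ) * (A 0 0 * s + A 0 1 * (((u:ℂ) + v*I)/(2*s)))
              + (((u:ℂ) - v*I)/(2*s)) * (A 1 0 * s + A 1 1 * (((u:ℂ) + v*I)/(2*s))) by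
          simp [dotProduct, mulVec, Fin.sum_univ_two, map_div₀, Complex.conj_ofReal, map_ofNat]
          exact Or.inl (by ring)]
        simp only [real_smul]
        rw [hα, hβ, hγ, hc]
        field_simp
        linear_combination A 1 1 * hC - (A 1 1 * (v:ℂ)^2) * Complex.I_sq
          + (4*(s:ℂ)^2*A 0 0 - 2*(1-(t:ℂ))*A 1 1) * hsC
end

section
/- Let x, y ∈ ℂ² be unit vectors with x*y ≠ 0 and |x*y| < 1, and set β = (y*x)/|x*y| and v = (√2/2)(x + iβ(y − (x*y)x)/‖y − (x*y)x‖). Then |x*v| = √2/2 and y*v = (√2/2)(y*x + iβ√(1 − |x*y|²)), so |y*v| = √2/2; consequently the rank-one projection vv* satisfies ⟨vv*, xx*⟩ = ⟨vv*, yy*⟩ = 1/2. -/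
open Matrix

/-- For unit vectors x, y ∈ ℂ² with 0 < |x*y| < 1, β = (y*x)/|x*y| and
v = (√2/2)(x + iβ(y − (x*y)x)/‖y − (x*y)x‖), one has |x*v| = √2/2,
y*v = (√2/2)(y*x + iβ√(1−|x*y|²)), hence |y*v| = √2/2; consequently
⟨vv*, xx*⟩ = |v*x|² = 1/2 and ⟨vv*, yy*⟩ = |v*y|² = 1/2. -/
theorem orthogonal_axis_vector (x y : Fin 2 → ℂ)
    (hx : star x ⬝ᵥ x = 1) (hy : star y ⬝ᵥ y = 1)
    (hne : star x ⬝ᵥ y ≠ 0) (hlt : ‖star x ⬝ᵥ y‖ < 1) :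
    let β : ℂ := (star y ⬝ᵥ x) / ((‖star x ⬝ᵥ y‖ : ℝ) : ℂ)
    let w : Fin 2 → ℂ := y - (star x ⬝ᵥ y) • x
    let nw : ℝ := Real.sqrt ((star w ⬝ᵥ w).re)
    let v : Fin 2 → ℂ := (Real.sqrt 2 / 2 : ℝ) • (x + (Complex.I * β / (nw : ℂ)) • w)
    ‖star x ⬝ᵥ v‖ = Real.sqrt 2 / 2 ∧
    star y ⬝ᵥ v = ((Real.sqrt 2 / 2 : ℝ) : ℂ) *
      (star y ⬝ᵥ x + Complex.I * β *
        ((Real.sqrt (1 - ‖star x ⬝ᵥ y‖ ^ 2) : ℝ) : ℂ)) ∧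
    ‖star y ⬝ᵥ v‖ = Real.sqrt 2 / 2 ∧
    ‖star v ⬝ᵥ x‖ ^ 2 = 1 / 2 ∧
    ‖star v ⬝ᵥ y‖ ^ 2 = 1 / 2 := by
  intro β w nw v
  set a : ℂ := star x ⬝ᵥ y with ha
  set r : ℝ := ‖a‖ with hr
  have hr0 : 0 < r := norm_pos_iff.mpr hne
  have hr1 : r < 1 := hlt
  have hyx : star y ⬝ᵥ x = (starRingEnd ℂ) a := by
    rw [star_dotProduct, ← ha]; rfl
  have haa : a * (starRingEnd ℂ) a = ((r : ℝ) : ℂ) ^ 2 := by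
    rw [Complex.mul_conj, ← Complex.sq_norm, ← hr]; push_cast; ring
  have hβ : β = (starRingEnd ℂ) a / ((r : ℝ) : ℂ) := by
    show star y ⬝ᵥ x / _ = _
    rw [hyx, ← ha, ← hr]
  have hxw : star x ⬝ᵥ w = 0 := by
    simp only [w, dotProduct_sub, dotProduct_smul, smul_eq_mul, hx, ← ha, mul_one, sub_self]
  have hyw : star y ⬝ᵥ w = ((1 - r ^ 2 : ℝ) : ℂ) := by
    simp only [w, dotProduct_sub, dotProduct_smul, smul_eq_mul, hy, hyx]
    rw [← ha, haa]; push_cast; ring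
  have hsw : star w = star y - (starRingEnd ℂ) a • star x := by
    rw [show w = y - a • x from rfl, star_sub, star_smul]; rfl
  have hww : star w ⬝ᵥ w = ((1 - r ^ 2 : ℝ) : ℂ) := by
    rw [hsw, sub_dotProduct, smul_dotProduct, smul_eq_mul, hxw, hyw, mul_zero, sub_zero]
  have hnwre : (star w ⬝ᵥ w).re = 1 - r ^ 2 := by rw [hww, Complex.ofReal_re]
  have hnw : nw = Real.sqrt (1 - r ^ 2) := by
    show Real.sqrt ((star w ⬝ᵥ w).re) = _
    rw [hnwre]
  have h1r : (0:ℝ) < 1 - r ^ 2 := by nlinarith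
  have hnw0 : 0 < nw := by rw [hnw]; positivity
  have hnw2 : nw ^ 2 = 1 - r ^ 2 := by rw [hnw]; exact Real.sq_sqrt h1r.le
  have hnwC : ((nw : ℝ) : ℂ) ≠ 0 := by exact_mod_cast hnw0.ne'
  have hrC : ((r : ℝ) : ℂ) ≠ 0 := by exact_mod_cast hr0.ne'
  have hnwC2 : ((nw : ℝ) : ℂ) ^ 2 = 1 - ((r : ℝ) : ℂ) ^ 2 := by
    rw [← Complex.ofReal_pow, hnw2]; push_cast; ring
  have hxv : star x ⬝ᵥ v = ((Real.sqrt 2 / 2 : ℝ) : ℂ) := by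
    simp [v, dotProduct_smul, dotProduct_add, hx, hxw, smul_eq_mul]
  have g1 : ‖star x ⬝ᵥ v‖ = Real.sqrt 2 / 2 := by
    rw [hxv, Complex.norm_real, Real.norm_eq_abs, abs_of_nonneg (by positivity)]
  have hid : Complex.I * β / ((nw : ℝ) : ℂ) * ((1 - r ^ 2 : ℝ) : ℂ)
      = Complex.I * β * ((nw : ℝ) : ℂ) := by
    have h2 : ((1 - r ^ 2 : ℝ) : ℂ) = ((nw : ℝ) : ℂ) ^ 2 := by
      rw [← hnw2]; push_cast; ring
    rw [h2]; field_simp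
  have hyv : star y ⬝ᵥ v = ((Real.sqrt 2 / 2 : ℝ) : ℂ) *
      ((starRingEnd ℂ) a + Complex.I * β * ((nw : ℝ) : ℂ)) := by
    simp only [v, dotProduct_smul, dotProduct_add, smul_eq_mul, Complex.real_smul,
      hyx, hyw, hid]
  have g2 : star y ⬝ᵥ v = ((Real.sqrt 2 / 2 : ℝ) : ℂ) *
      (star y ⬝ᵥ x + Complex.I * β *
        ((Real.sqrt (1 - ‖star x ⬝ᵥ y‖ ^ 2) : ℝ) : ℂ)) := by
    rw [hyv, hyx, ← ha, ← hr, ← hnw]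
  have hsu : (starRingEnd ℂ) ((starRingEnd ℂ) a + Complex.I * β * ((nw : ℝ) : ℂ))
      = a - Complex.I * (a / ((r : ℝ) : ℂ)) * ((nw : ℝ) : ℂ) := by
    rw [hβ]
    simp only [map_add, _root_.map_mul, map_div₀, Complex.conj_I, Complex.conj_conj,
      Complex.conj_ofReal]
    ring
  have hu : ((starRingEnd ℂ) a + Complex.I * β * ((nw : ℝ) : ℂ)) *
      (starRingEnd ℂ) ((starRingEnd ℂ) a + Complex.I * β * ((nw : ℝ) : ℂ)) = 1 := by
    rw [hsu, hβ]
    field_simp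
    linear_combination (((r:ℝ):ℂ) ^ 2 - Complex.I ^ 2 * ((nw:ℝ):ℂ) ^ 2) * haa
      - ((nw:ℝ):ℂ) ^ 2 * ((r:ℝ):ℂ) ^ 2 * Complex.I_sq + ((r:ℝ):ℂ) ^ 2 * hnwC2
  have habsu : ‖(starRingEnd ℂ) a + Complex.I * β * ((nw : ℝ) : ℂ)‖ = 1 := by
    have h := Complex.mul_conj ((starRingEnd ℂ) a + Complex.I * β * ((nw : ℝ) : ℂ))
    rw [hu] at h
    have hn : Complex.normSq ((starRingEnd ℂ) a + Complex.I * β * ((nw : ℝ) : ℂ)) = 1 := by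
      exact_mod_cast h.symm
    rw [Complex.norm_def, hn, Real.sqrt_one]
  have g3 : ‖star y ⬝ᵥ v‖ = Real.sqrt 2 / 2 := by
    rw [hyv, norm_mul, habsu, mul_one, Complex.norm_real, Real.norm_eq_abs, abs_of_nonneg (by positivity)]
  have hsq : (Real.sqrt 2 / 2) ^ 2 = 1 / 2 := by
    rw [div_pow, Real.sq_sqrt (by norm_num : (0:ℝ) ≤ 2)]; norm_num
  refine ⟨g1, g2, g3, ?_, ?_⟩
  · rw [star_dotProduct, show (star (star x ⬝ᵥ v)) = (starRingEnd ℂ) (star x ⬝ᵥ v) from rfl,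
      Complex.norm_conj, g1, hsq]
  · rw [star_dotProduct, show (star (star y ⬝ᵥ v)) = (starRingEnd ℂ) (star y ⬝ᵥ v) from rfl,
      Complex.norm_conj, g3, hsq]
end
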